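/- For every n ≥ 2, (1/(2n−3)!!) ∑_{k=1}^{n−1} k · (2n−k−3)!·k/((n−k−1)!·2^(n−k−1)) = (1/(2n−3)) ∑_{k≥0} (2)_k(2)_k(2−n)_k · 2^k / ((1)_k(4−2n)_k · k!), where the right-hand sum is finite since (2−n)_k = 0 for k ≥ n−1. -/

import Mathlib

/-- Ascending Pochhammer at a negative integer `-m`, for `j ≤ m`. -/
lemma asc_eval_neg (m : ℕ) : ∀ j : ℕ, j ≤ m →
    (ascPochhammer ℚ j).eval (-(m : ℚ)) =
      (-1) ^ j * (Nat.factorial m : ℚ) / (Nat.factorial (m - j) : ℚ) := by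
  intro j
  induction j with
  | zero =>
      intro _
      simp [div_self (by exact_mod_cast Nat.factorial_ne_zero m : (Nat.factorial m : ℚ) ≠ 0)]
  | succ j ih =>
      intro hj
      have hj' : j ≤ m := Nat.le_of_succ_le hj
      rw [ascPochhammer_succ_eval, ih hj']
      have hmj : m - j = (m - (j + 1)) + 1 := by omega
      have hc : ((m - j : ℕ) : ℚ) = ((m - (j + 1) : ℕ) : ℚ) + 1 := by
        rw [hmj]; push_cast; ring
      have h1 : (Nat.factorial (m - j) : ℚ) =
          (((m - (j + 1) : ℕ) : ℚ) + 1) * (Nat.factorial (m - (j + 1)) : ℚ) := by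
        rw [hmj, Nat.factorial_succ]; push_cast; ring
      have h2 : (-(m : ℚ) + j) = -(((m - (j + 1) : ℕ) : ℚ) + 1) := by
        rw [← hc, Nat.cast_sub hj']; ring
      have hne1 : (Nat.factorial (m - (j + 1)) : ℚ) ≠ 0 := by
        exact_mod_cast Nat.factorial_ne_zero _
      have hne2 : ((m - (j + 1) : ℕ) : ℚ) + 1 ≠ 0 := by positivity
      rw [h1, h2]
      generalize ((m - (j + 1) : ℕ) : ℚ) = x at hne2 ⊢
      generalize (Nat.factorial (m - (j + 1)) : ℚ) = F at hne1 ⊢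
      field_simp
      ring

/-- Ascending Pochhammer at `-m` vanishes for `j > m`. -/
lemma asc_eval_neg_zero (m : ℕ) : ∀ j : ℕ, m < j →
    (ascPochhammer ℚ j).eval (-(m : ℚ)) = 0 := by
  intro j
  induction j with
  | zero => omega
  | succ j ih =>
      intro hj
      rw [ascPochhammer_succ_eval]
      rcases Nat.lt_or_ge m j with h | h
      · rw [ih h, zero_mul]
      · have : m = j := by omega
        subst this
        simp

/-- (1/(2n−3)!!)·∑_{k=1}^{n−1} k·(2n−k−3)!·k/((n−k−1)!·2^(n−k−1))
  = (1/(2n−3))·∑_{k≥0} (2)_k(2)_k(2−n)_k·2^k/((1)_k(4−2n)_k·k!),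
the right-hand series terminating since (2−n)_k = 0 for k ≥ n−1. -/
theorem sackin_hypergeometric_identity (n : ℕ) (hn : 2 ≤ n) :
    (1 / (Nat.doubleFactorial (2 * n - 3) : ℚ)) *
      ∑ k ∈ Finset.Icc 1 (n - 1),
        (k : ℚ) * ((Nat.factorial (2 * n - k - 3) : ℚ) * k /
          ((Nat.factorial (n - k - 1) : ℚ) * 2 ^ (n - k - 1))) =
    (1 / (2 * (n : ℚ) - 3)) *
      ∑ᶠ k : ℕ,
        (ascPochhammer ℚ k).eval 2 * (ascPochhammer ℚ k).eval 2 *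
          (ascPochhammer ℚ k).eval (2 - (n : ℚ)) * 2 ^ k /
        ((ascPochhammer ℚ k).eval 1 * (ascPochhammer ℚ k).eval (4 - 2 * (n : ℚ)) *
          (Nat.factorial k : ℚ)) := by
  obtain ⟨m, rfl⟩ : ∃ m, n = m + 2 := ⟨n - 2, by omega⟩
  have hcast1 : (2 : ℚ) - ((m + 2 : ℕ) : ℚ) = -(m : ℚ) := by push_cast; ring
  have hcast2 : (4 : ℚ) - 2 * ((m + 2 : ℕ) : ℚ) = -((2 * m : ℕ) : ℚ) := by push_cast; ring
  -- turn the finsum into a finite sum over range (m+1)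
  rw [finsum_eq_sum_of_support_subset _ (s := Finset.range (m + 1)) (by
    intro j hj
    simp only [Function.mem_support] at hj
    by_contra hmem
    simp only [Finset.coe_range, Set.mem_Iio, not_lt] at hmem
    apply hj
    rw [hcast1, asc_eval_neg_zero m j (by omega)]
    simp)]
  -- turn the Icc sum into a range sum
  have hIcc : (m + 2) - 1 = m + 1 := by omega
  rw [hIcc, ← Finset.Ico_add_one_right_eq_Icc, Finset.sum_Ico_eq_sum_range]
  have hrange : m + 1 + 1 - 1 = m + 1 := by omega
  rw [hrange, Finset.mul_sum, Finset.mul_sum]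
  refine Finset.sum_congr rfl fun j hj => ?_
  rw [Finset.mem_range] at hj
  have hjm : j ≤ m := by omega
  -- simplify natural number index arithmetic
  have e1 : 2 * (m + 2) - (1 + j) - 3 = 2 * m - j := by omega
  have e2 : (m + 2) - (1 + j) - 1 = m - j := by omega
  rw [e1, e2, hcast1, hcast2, asc_eval_neg m j hjm, asc_eval_neg (2 * m) j (by omega),
    ascPochhammer_eval_one]
  have h2 : (ascPochhammer ℚ j).eval 2 = (Nat.factorial (j + 1) : ℚ) := by
    have h := factorial_mul_ascPochhammer ℚ 1 j
    norm_num [Nat.add_comm 1 j] at h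
    exact_mod_cast h
  rw [h2]
  -- key double factorial fact : (2m+1)·(2m)! = (2m+1)!!·2^m·m!
  have hkey : ((2 * m + 1 : ℕ) : ℚ) * (Nat.factorial (2 * m) : ℚ) =
      (Nat.doubleFactorial (2 * m + 1) : ℚ) * 2 ^ m * (Nat.factorial m : ℚ) := by
    have h1 : (2 * m + 1) * Nat.factorial (2 * m) = Nat.factorial (2 * m + 1) := by
      rw [Nat.factorial_succ]
    have h2 : Nat.factorial (2 * m + 1) =
        Nat.doubleFactorial (2 * m + 1) * Nat.doubleFactorial (2 * m) := by
      exact_mod_cast Nat.factorial_eq_mul_doubleFactorial (2 * m)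
    have h3 : Nat.doubleFactorial (2 * m) = 2 ^ m * Nat.factorial m :=
      Nat.doubleFactorial_two_mul m
    have h4 : (2 * m + 1) * Nat.factorial (2 * m)
        = Nat.doubleFactorial (2 * m + 1) * 2 ^ m * Nat.factorial m := by
      rw [h1, h2, h3]; ring
    exact_mod_cast h4
  have edf : 2 * (m + 2) - 3 = 2 * m + 1 := by omega
  rw [edf]
  have hmul : 2 * ((m + 2 : ℕ) : ℚ) - 3 = ((2 * m + 1 : ℕ) : ℚ) := by push_cast; ring
  rw [hmul]
  -- powers of two
  have hpow : (2 : ℚ) ^ (m - j) * 2 ^ j = 2 ^ m := by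
    rw [← pow_add]; congr 1; omega
  -- factorial identities
  have hf1 : (Nat.factorial (j + 1) : ℚ) = ((j : ℚ) + 1) * (Nat.factorial j : ℚ) := by
    rw [Nat.factorial_succ]; push_cast; ring
  have hf2 : (Nat.factorial (2 * m) : ℚ) =
      ((Nat.factorial (2 * m) : ℚ) / (Nat.factorial (2 * m - j) : ℚ)) *
        (Nat.factorial (2 * m - j) : ℚ) := by
    field_simp
  -- nonzero denominators
  have nz0 : ((2 * m + 1 : ℕ) : ℚ) ≠ 0 := by positivity
  have nzdf : (Nat.doubleFactorial (2 * m + 1) : ℚ) ≠ 0 := by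
    exact_mod_cast (Nat.doubleFactorial_pos _).ne'
  have nzf : ∀ a : ℕ, (Nat.factorial a : ℚ) ≠ 0 := fun a => by
    exact_mod_cast Nat.factorial_ne_zero a
  have nzp : ∀ a : ℕ, ((2 : ℚ) ^ a) ≠ 0 := fun a => by positivity
  have nzm1 : ((-1 : ℚ) ^ j) ≠ 0 := by
    simp [pow_ne_zero]
  rw [hf1]
  rw [← hpow] at hkey
  field_simp
  push_cast at hkey ⊢
  linear_combination ((1 + (j : ℚ)) * (1 + j)) * hkey
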